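/- Let V be a finite-dimensional complex inner product space, let λ ∈ (0,1] and ε ∈ [0,λ) be real. Let v ∈ V be a unit vector, let E be a linear operator on V with ‖E‖_op ≤ ε and E v = 0, and let T = λ·(v v†) + E, where v v† is the orthogonal projection onto the span of v. Then there exists a vector f ∈ V with ‖f‖ ≤ 1/(1 − ε/λ) such that for every natural number K and all vectors a, b ∈ V: |⟨a, T^K b⟩ − ⟨a, v⟩·⟨f, b⟩·λ^K| ≤ (1 + 1/(1 − ε/λ)) · ‖a‖ · ‖b‖ · ε^K. -/

import Mathlib

theorem stmt9 {V : Type*} [NormedAddCommGroup V] [InnerProductSpace ℂ V]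
    [FiniteDimensional ℂ V]
    (lam : ℝ) (hlam0 : 0 < lam) (hlam1 : lam ≤ 1)
    (ε : ℝ) (hε0 : 0 ≤ ε) (heps_lt : ε < lam)
    (v : V) (hv : ‖v‖ = 1)
    (E : V →L[ℂ] V) (hE : ‖E‖ ≤ ε) (hEv : E v = 0)
    (T : V →L[ℂ] V)
    (hT : ∀ x : V, T x = (lam : ℂ) • ((inner ℂ v x : ℂ) • v) + E x) :
    ∃ f : V, ‖f‖ ≤ 1 / (1 - ε / lam) ∧
      ∀ (K : ℕ) (a b : V),
        ‖(inner ℂ a ((T ^ K) b) : ℂ) -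
            (inner ℂ a v : ℂ) * (inner ℂ f b : ℂ) * (lam : ℂ) ^ K‖ ≤
          (1 + 1 / (1 - ε / lam)) * ‖a‖ * ‖b‖ * ε ^ K := by
  have hlam_ne : (lam : ℂ) ≠ 0 := by
    exact_mod_cast Complex.ofReal_ne_zero.mpr hlam0.ne'
  set r : ℝ := ε / lam with hrdef
  have hr0 : 0 ≤ r := div_nonneg hε0 hlam0.le
  have hr1 : r < 1 := (div_lt_one hlam0).mpr heps_lt
  have h1r : 0 < 1 - r := by linarith
  set A : V →L[ℂ] V := ContinuousLinearMap.adjoint E with hAdef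
  set S : V →L[ℂ] V := ((lam : ℂ)⁻¹) • A with hSdef
  -- pointwise power bounds
  have hEK : ∀ (K : ℕ) (b : V), ‖(E ^ K) b‖ ≤ ε ^ K * ‖b‖ := by
    intro K
    induction K with
    | zero => intro b; simp
    | succ K ih =>
      intro b
      rw [pow_succ, ContinuousLinearMap.mul_apply]
      calc ‖(E ^ K) (E b)‖ ≤ ε ^ K * ‖E b‖ := ih (E b)
        _ ≤ ε ^ K * (ε * ‖b‖) := by
            apply mul_le_mul_of_nonneg_left _ (pow_nonneg hε0 K)
            exact (E.le_opNorm b).trans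
              (mul_le_mul_of_nonneg_right hE (norm_nonneg b))
        _ = ε ^ (K + 1) * ‖b‖ := by ring
  have hSnorm : ‖S‖ ≤ r := by
    rw [hSdef]
    refine (norm_smul_le ((lam : ℂ)⁻¹) A).trans ?_
    have hA : ‖A‖ = ‖E‖ := by rw [hAdef]; exact LinearIsometryEquiv.norm_map ContinuousLinearMap.adjoint E
    rw [hA]
    have h1 : ‖((lam : ℂ)⁻¹)‖ = lam⁻¹ := by
      rw [norm_inv, Complex.norm_real, Real.norm_of_nonneg hlam0.le]
    rw [h1, hrdef, div_eq_inv_mul]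
    exact mul_le_mul_of_nonneg_left hE (inv_nonneg.mpr hlam0.le)
  have hSK : ∀ (K : ℕ) (w : V), ‖(S ^ K) w‖ ≤ r ^ K * ‖w‖ := by
    intro K
    induction K with
    | zero => intro w; simp
    | succ K ih =>
      intro w
      rw [pow_succ, ContinuousLinearMap.mul_apply]
      calc ‖(S ^ K) (S w)‖ ≤ r ^ K * ‖S w‖ := ih (S w)
        _ ≤ r ^ K * (r * ‖w‖) := by
            apply mul_le_mul_of_nonneg_left _ (pow_nonneg hr0 K)
            exact (S.le_opNorm w).trans
              (mul_le_mul_of_nonneg_right hSnorm (norm_nonneg w))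
        _ = r ^ (K + 1) * ‖w‖ := by ring
  have hSv : ∀ j : ℕ, ‖(S ^ j) v‖ ≤ r ^ j := by
    intro j
    have := hSK j v
    rwa [hv, mul_one] at this
  have hgeo : Summable (fun j : ℕ => r ^ j) := summable_geometric_of_lt_one hr0 hr1
  have hsum : Summable (fun j : ℕ => (S ^ j) v) :=
    Summable.of_norm_bounded hgeo hSv
  set f : V := ∑' j : ℕ, (S ^ j) v with hfdef
  set g : ℕ → V := fun K => ∑ j ∈ Finset.range K, (S ^ j) v with hgdef
  -- tail bound
  have htail : ∀ K : ℕ, ‖f - g K‖ ≤ r ^ K * (1 - r)⁻¹ := by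
    intro K
    have hsplit := Summable.sum_add_tsum_nat_add K hsum
    have hfg : f - g K = ∑' j : ℕ, (S ^ (j + K)) v := by
      rw [hfdef, hgdef, ← hsplit]; abel
    rw [hfg]
    have hsum2 : Summable (fun j : ℕ => r ^ (j + K)) := by
      simpa [pow_add] using hgeo.mul_right (r ^ K)
    have hsumn : Summable (fun j : ℕ => ‖(S ^ (j + K)) v‖) :=
      Summable.of_nonneg_of_le (fun _ => norm_nonneg _) (fun j => hSv (j + K)) hsum2
    calc ‖∑' j : ℕ, (S ^ (j + K)) v‖ ≤ ∑' j : ℕ, ‖(S ^ (j + K)) v‖ :=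
          norm_tsum_le_tsum_norm hsumn
      _ ≤ ∑' j : ℕ, r ^ (j + K) := Summable.tsum_le_tsum (fun j => hSv (j + K)) hsumn hsum2
      _ = r ^ K * (1 - r)⁻¹ := by
          simp only [pow_add]
          rw [tsum_mul_right, tsum_geometric_of_lt_one hr0 hr1, mul_comm]
  -- adjoint powers
  have hadj : ∀ (K : ℕ) (w x : V), (inner ℂ ((A ^ K) w) x : ℂ) = inner ℂ w ((E ^ K) x) := by
    intro K
    induction K with
    | zero => intro w x; simp
    | succ K ih =>
      intro w x
      rw [pow_succ, ContinuousLinearMap.mul_apply, ih (A w) x, hAdef,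
        ContinuousLinearMap.adjoint_inner_left]
      rw [pow_succ']
      rfl
  have hvv : (inner ℂ v v : ℂ) = 1 := by
    rw [inner_self_eq_norm_sq_to_K, hv]; norm_num
  -- key structural formula
  have key : ∀ (K : ℕ) (x : V),
      (T ^ K) x = ((lam : ℂ) ^ K * (inner ℂ (g K) x : ℂ)) • v + (E ^ K) x := by
    intro K
    induction K with
    | zero => intro x; simp [hgdef]
    | succ K ih =>
      intro x
      rw [pow_succ', ContinuousLinearMap.mul_apply, hT, ih x]
      have hgK1 : (inner ℂ (g (K + 1)) x : ℂ)
          = inner ℂ (g K) x + ((lam : ℂ)⁻¹) ^ K * (inner ℂ v ((E ^ K) x) : ℂ) := by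
        rw [hgdef]
        simp only [Finset.sum_range_succ]
        rw [inner_add_left]
        congr 1
        have hSpow : (S ^ K) v = ((lam : ℂ)⁻¹) ^ K • ((A ^ K) v) := by
          rw [hSdef, smul_pow, ContinuousLinearMap.smul_apply]
        rw [hSpow, inner_smul_left, hadj K v x]
        congr 1
        rw [map_pow, map_inv₀, Complex.conj_ofReal]
      have hinner : (inner ℂ v (((lam : ℂ) ^ K * (inner ℂ (g K) x : ℂ)) • v + (E ^ K) x) : ℂ)
          = (lam : ℂ) ^ K * (inner ℂ (g K) x : ℂ) + inner ℂ v ((E ^ K) x) := by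
        rw [inner_add_right, inner_smul_right, hvv, mul_one]
      have hEpart : E (((lam : ℂ) ^ K * (inner ℂ (g K) x : ℂ)) • v + (E ^ K) x)
          = (E ^ (K + 1)) x := by
        rw [map_add, map_smul, hEv, smul_zero, zero_add, pow_succ',
          ContinuousLinearMap.mul_apply]
      rw [hinner, hEpart, hgK1]
      congr 1
      rw [smul_smul]
      congr 1
      field_simp
      have hKK : (lam : ℂ) ^ K * ((lam : ℂ)⁻¹) ^ K = 1 := by
        rw [inv_pow]; exact mul_inv_cancel₀ (pow_ne_zero K hlam_ne)
      linear_combination (-((lam : ℂ) * inner ℂ v ((E ^ K) x))) * hKK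
  refine ⟨f, ?_, ?_⟩
  · have h0 := htail 0
    simp only [hgdef, Finset.range_zero, Finset.sum_empty, sub_zero, pow_zero, one_mul] at h0
    rw [one_div]
    exact h0
  · intro K a b
    have hmain : (inner ℂ a ((T ^ K) b) : ℂ) - (inner ℂ a v : ℂ) * (inner ℂ f b : ℂ) * (lam : ℂ) ^ K
        = (inner ℂ a v : ℂ) * (lam : ℂ) ^ K * (inner ℂ (g K - f) b : ℂ)
          + inner ℂ a ((E ^ K) b) := by
      rw [key K b, inner_add_right, inner_smul_right, inner_sub_left]
      ring
    rw [hmain]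
    have h1 : ‖(inner ℂ a v : ℂ) * (lam : ℂ) ^ K * (inner ℂ (g K - f) b : ℂ)‖
        ≤ ‖a‖ * lam ^ K * (r ^ K * (1 - r)⁻¹ * ‖b‖) := by
      rw [norm_mul, norm_mul]
      have ha : ‖(inner ℂ a v : ℂ)‖ ≤ ‖a‖ := by
        have h := norm_inner_le_norm (𝕜 := ℂ) a v
        rwa [hv, mul_one] at h
      have hl : ‖(lam : ℂ) ^ K‖ = lam ^ K := by
        rw [norm_pow, Complex.norm_real, Real.norm_of_nonneg hlam0.le]
      have hb : ‖(inner ℂ (g K - f) b : ℂ)‖ ≤ r ^ K * (1 - r)⁻¹ * ‖b‖ := by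
        refine (norm_inner_le_norm (𝕜 := ℂ) _ _).trans ?_
        apply mul_le_mul_of_nonneg_right _ (norm_nonneg b)
        rw [← norm_neg, neg_sub]
        exact htail K
      rw [hl]
      have h0 : (0:ℝ) ≤ ‖a‖ * lam ^ K := by positivity
      calc ‖(inner ℂ a v : ℂ)‖ * lam ^ K * ‖(inner ℂ (g K - f) b : ℂ)‖
          ≤ ‖a‖ * lam ^ K * ‖(inner ℂ (g K - f) b : ℂ)‖ := by
            apply mul_le_mul_of_nonneg_right _ (norm_nonneg _)
            exact mul_le_mul_of_nonneg_right ha (pow_nonneg hlam0.le K)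
        _ ≤ ‖a‖ * lam ^ K * (r ^ K * (1 - r)⁻¹ * ‖b‖) :=
            mul_le_mul_of_nonneg_left hb h0
    have h2 : ‖(inner ℂ a ((E ^ K) b) : ℂ)‖ ≤ ‖a‖ * (ε ^ K * ‖b‖) := by
      refine (norm_inner_le_norm (𝕜 := ℂ) _ _).trans ?_
      exact mul_le_mul_of_nonneg_left (hEK K b) (norm_nonneg a)
    have hlr : lam ^ K * r ^ K = ε ^ K := by
      rw [← mul_pow, hrdef, mul_div_cancel₀ _ hlam0.ne']
    calc ‖(inner ℂ a v : ℂ) * (lam : ℂ) ^ K * (inner ℂ (g K - f) b : ℂ) + inner ℂ a ((E ^ K) b)‖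
        ≤ ‖(inner ℂ a v : ℂ) * (lam : ℂ) ^ K * (inner ℂ (g K - f) b : ℂ)‖
          + ‖(inner ℂ a ((E ^ K) b) : ℂ)‖ := norm_add_le _ _
      _ ≤ ‖a‖ * lam ^ K * (r ^ K * (1 - r)⁻¹ * ‖b‖) + ‖a‖ * (ε ^ K * ‖b‖) :=
          add_le_add h1 h2
      _ = (1 + 1 / (1 - r)) * ‖a‖ * ‖b‖ * ε ^ K := by
          have hne : (1 - r) ≠ 0 := h1r.ne'
          rw [← hlr]
          field_simp
          ring
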